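/- arXiv:2403.06156 — 2 statements merged into one kernel-verified Lean document; each statement's English description precedes it below -/
import Mathlib

section
/- The Miura relation holds: with μ = ζ(u+v) - ζ(u) - ζ(v), we have 2℘(u) + λ₂ + ℘(v) = μ² + dμ/du. -/
open Complex

/-- `WeierstrassData` packages the Weierstrass sigma function `σ` of the period
lattice `Γ = 2ℤω₁ + 2ℤω₂`, together with the zeta function `ζ = σ'/σ` and
`℘ = -(log σ)'' = -ζ'`. -/
structure WeierstrassData where
  σ : ℂ → ℂ
  ζ : ℂ → ℂ
  ℘ : ℂ → ℂ
  ω₁ : ℂ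
  ω₂ : ℂ
  Γ : Set ℂ
  hΓ : Γ = {z : ℂ | ∃ m n : ℤ, z = 2 * m * ω₁ + 2 * n * ω₂}
  nondeg : (ω₂ / ω₁).im ≠ 0
  σ_diff : Differentiable ℂ σ
  σ_zero : ∀ z : ℂ, σ z = 0 ↔ z ∈ Γ
  σ_odd : ∀ z : ℂ, σ (-z) = - σ z
  σ_deriv_zero : deriv σ 0 = 1
  ζ_def : ∀ z ∉ Γ, ζ z = deriv σ z / σ z
  ζ_diff : ∀ z ∉ Γ, DifferentiableAt ℂ ζ z
  ℘_def : ∀ z ∉ Γ, ℘ z = - deriv ζ z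
  ℘_diff : ∀ z ∉ Γ, DifferentiableAt ℂ ℘ z
  ℘_diff2 : ∀ z ∉ Γ, DifferentiableAt ℂ (deriv ℘) z
/-- The curve condition `y² = x³ + λ₂x² + λ₁x + λ₀` for `x = ℘`, `y = ℘'/2`. -/
def WeierstrassData.OnCurveL (W : WeierstrassData) (l2 l1 l0 : ℂ) : Prop :=
  ∀ z ∉ W.Γ, (deriv W.℘ z / 2) ^ 2
    = W.℘ z ^ 3 + l2 * W.℘ z ^ 2 + l1 * W.℘ z + l0

namespace MiuraProof

open Metric Filter Topology Set

lemma gamma_eq (W : WeierstrassData) : W.Γ = W.σ ⁻¹' {0} := by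
  ext z
  simp only [Set.mem_preimage, Set.mem_singleton_iff]
  exact (W.σ_zero z).symm

lemma gamma_closed (W : WeierstrassData) : IsClosed W.Γ := by
  rw [gamma_eq]
  exact isClosed_singleton.preimage W.σ_diff.continuous

lemma gamma_countable (W : WeierstrassData) : W.Γ.Countable := by
  rw [W.hΓ]
  have h : {z : ℂ | ∃ m n : ℤ, z = 2 * m * W.ω₁ + 2 * n * W.ω₂}
      = Set.range (fun p : ℤ × ℤ => 2 * p.1 * W.ω₁ + 2 * p.2 * W.ω₂) := by
    ext z
    constructor
    · rintro ⟨m, n, rfl⟩; exact ⟨(m, n), rfl⟩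
    · rintro ⟨⟨m, n⟩, rfl⟩; exact ⟨m, n, rfl⟩
  rw [h]
  exact Set.countable_range _

lemma zero_mem_gamma (W : WeierstrassData) : (0 : ℂ) ∈ W.Γ := by
  rw [W.hΓ]
  exact ⟨0, 0, by simp⟩

lemma gammac_open (W : WeierstrassData) : IsOpen W.Γᶜ :=
  (gamma_closed W).isOpen_compl

lemma gammac_preconnected (W : WeierstrassData) : IsPreconnected W.Γᶜ :=
  (((gamma_countable W).isPathConnected_compl_of_one_lt_rank
    (by rw [rank_real_complex]; exact Nat.one_lt_ofNat)).isConnected).isPreconnected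

lemma zeta_anal (W : WeierstrassData) : AnalyticOnNhd ℂ W.ζ W.Γᶜ := by
  have h : DifferentiableOn ℂ W.ζ W.Γᶜ := fun z hz => (W.ζ_diff z hz).differentiableWithinAt
  exact h.analyticOnNhd (gammac_open W)

lemma wp_anal (W : WeierstrassData) : AnalyticOnNhd ℂ W.℘ W.Γᶜ := by
  have h : DifferentiableOn ℂ W.℘ W.Γᶜ := fun z hz => (W.℘_diff z hz).differentiableWithinAt
  exact h.analyticOnNhd (gammac_open W)

lemma wp1_anal (W : WeierstrassData) : AnalyticOnNhd ℂ (deriv W.℘) W.Γᶜ := by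
  have h : DifferentiableOn ℂ (deriv W.℘) W.Γᶜ :=
    fun z hz => (W.℘_diff2 z hz).differentiableWithinAt
  exact h.analyticOnNhd (gammac_open W)

lemma wp2_anal (W : WeierstrassData) : AnalyticOnNhd ℂ (deriv (deriv W.℘)) W.Γᶜ :=
  (wp1_anal W).deriv_of_isOpen (gammac_open W)

lemma deriv_zeta (W : WeierstrassData) {z : ℂ} (hz : z ∉ W.Γ) :
    deriv W.ζ z = - W.℘ z := by
  rw [W.℘_def z hz]; ring

/-- A function with everywhere-vanishing derivative on a ball is constant there. -/
lemma const_on_ball {f : ℂ → ℂ} {c : ℂ} {ρ : ℝ}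
    (hf : ∀ x ∈ Metric.ball c ρ, DifferentiableAt ℂ f x)
    (hd : ∀ x ∈ Metric.ball c ρ, deriv f x = 0)
    {x : ℂ} (hx : x ∈ Metric.ball c ρ) (hc : c ∈ Metric.ball c ρ) : f x = f c := by
  apply (convex_ball c ρ).is_const_of_fderivWithin_eq_zero
    (fun y hy => (hf y hy).differentiableWithinAt) ?_ hx hc
  intro y hy
  rw [fderivWithin_of_isOpen Metric.isOpen_ball hy, ← toSpanSingleton_deriv, hd y hy]
  exact ContinuousLinearMap.ext_ring (by simp)

end MiuraProof
namespace MiuraProof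

open Metric Filter Topology Set

/-- The domain `Ω = {z | z ∉ Γ ∧ z + v ∉ Γ}`. -/
def Om (W : WeierstrassData) (v : ℂ) : Set ℂ := {z : ℂ | z ∉ W.Γ ∧ z + v ∉ W.Γ}

lemma om_eq (W : WeierstrassData) (v : ℂ) :
    Om W v = (W.Γ ∪ (fun z : ℂ => z + v) ⁻¹' W.Γ)ᶜ := by
  ext z
  simp [Om, not_or]

lemma om_open (W : WeierstrassData) (v : ℂ) : IsOpen (Om W v) := by
  rw [om_eq]
  exact ((gamma_closed W).union ((gamma_closed W).preimage (by continuity))).isOpen_compl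

lemma om_countable_compl (W : WeierstrassData) (v : ℂ) :
    (W.Γ ∪ (fun z : ℂ => z + v) ⁻¹' W.Γ).Countable := by
  refine (gamma_countable W).union ?_
  have h : (fun z : ℂ => z + v) ⁻¹' W.Γ = (fun z : ℂ => z - v) '' W.Γ := by
    ext z
    constructor
    · intro hz; exact ⟨z + v, hz, by ring⟩
    · rintro ⟨g, hg, rfl⟩; simpa using hg
  rw [h]
  exact (gamma_countable W).image _

lemma om_preconnected (W : WeierstrassData) (v : ℂ) : IsPreconnected (Om W v) := by
  rw [om_eq]
  exact (((om_countable_compl W v).isPathConnected_compl_of_one_lt_rank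
    (by rw [rank_real_complex]; exact Nat.one_lt_ofNat)).isConnected).isPreconnected

/-- The derivative of `℘` cannot vanish identically on `Γᶜ`. -/
lemma wp_deriv_not_identically_zero (W : WeierstrassData)
    (hEq : Set.EqOn (deriv W.℘) (fun _ => (0 : ℂ)) W.Γᶜ) : False := by
  -- pick a point z₀ ∉ Γ
  obtain ⟨z₀, hz₀⟩ : W.Γᶜ.Nonempty := ((gamma_countable W).dense_compl ℂ).nonempty
  -- ℘ is locally constant, hence constant on Γᶜ
  obtain ⟨ρ, hρpos, hρ⟩ := Metric.isOpen_iff.1 (gammac_open W) z₀ hz₀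
  have hwp_const : Set.EqOn W.℘ (fun _ => W.℘ z₀) W.Γᶜ := by
    apply AnalyticOnNhd.eqOn_of_preconnected_of_eventuallyEq (wp_anal W)
      analyticOnNhd_const (gammac_preconnected W) hz₀
    filter_upwards [Metric.isOpen_ball.mem_nhds (Metric.mem_ball_self hρpos)] with x hx
    exact const_on_ball (fun y hy => W.℘_diff y (hρ hy))
      (fun y hy => hEq (hρ hy)) hx (Metric.mem_ball_self hρpos)
  set c := W.℘ z₀ with hc
  -- hence deriv ζ = -c on Γᶜ, so F := ζ + c • id has zero derivative on Γᶜ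
  have hdF : ∀ x ∈ W.Γᶜ, deriv (fun z => W.ζ z + c * z) x = 0 := by
    intro x hx
    rw [deriv_fun_add (W.ζ_diff x hx) (by fun_prop)]
    rw [deriv_zeta W hx, hwp_const hx]
    have h2 : HasDerivAt (fun z : ℂ => c * z) c x := by
      simpa using (hasDerivAt_id x).const_mul c
    rw [h2.deriv]
    simp
  have hF_anal : AnalyticOnNhd ℂ (fun z => W.ζ z + c * z) W.Γᶜ := by
    have h : DifferentiableOn ℂ (fun z => W.ζ z + c * z) W.Γᶜ :=
      fun z hz => ((W.ζ_diff z hz).add (by fun_prop)).differentiableWithinAt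
    exact h.analyticOnNhd (gammac_open W)
  have hF_const : Set.EqOn (fun z => W.ζ z + c * z) (fun _ => W.ζ z₀ + c * z₀) W.Γᶜ := by
    apply AnalyticOnNhd.eqOn_of_preconnected_of_eventuallyEq hF_anal
      analyticOnNhd_const (gammac_preconnected W) hz₀
    filter_upwards [Metric.isOpen_ball.mem_nhds (Metric.mem_ball_self hρpos)] with x hx
    exact const_on_ball
      (fun y hy => (W.ζ_diff y (hρ hy)).add (by fun_prop))
      (fun y hy => hdF y (hρ hy)) hx (Metric.mem_ball_self hρpos)
  set K := W.ζ z₀ + c * z₀ with hK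
  -- σ' = (K - c z) σ on Γᶜ, hence everywhere by density
  have hσ' : ∀ z : ℂ, deriv W.σ z = (K - c * z) * W.σ z := by
    have hcont1 : Continuous (deriv W.σ) := by
      have h : AnalyticOnNhd ℂ (deriv W.σ) Set.univ :=
        (W.σ_diff.differentiableOn.analyticOnNhd isOpen_univ).deriv_of_isOpen isOpen_univ
      exact Differentiable.continuous (fun z => (h z (Set.mem_univ z)).differentiableAt)
    have hcont2 : Continuous (fun z : ℂ => (K - c * z) * W.σ z) := by
      exact (continuous_const.sub (continuous_const.mul continuous_id)).mul
        W.σ_diff.continuous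
    have hEqOn : Set.EqOn (deriv W.σ) (fun z => (K - c * z) * W.σ z) W.Γᶜ := by
      intro z hz
      have hσz : W.σ z ≠ 0 := fun h => hz ((W.σ_zero z).1 h)
      have hζ : deriv W.σ z = W.ζ z * W.σ z := by
        rw [W.ζ_def z hz]; field_simp
      have hFz : W.ζ z + c * z = K := hF_const hz
      have hz2 : W.ζ z = K - c * z := eq_sub_of_add_eq hFz
      show deriv W.σ z = (K - c * z) * W.σ z
      rw [hζ, hz2]
    exact fun z => congrFun (Continuous.ext_on ((gamma_countable W).dense_compl ℂ)
      hcont1 hcont2 hEqOn) z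
  -- E := σ z * exp (c z²/2 - K z) has zero derivative
  set E := fun z : ℂ => W.σ z * Complex.exp (c * z ^ 2 / 2 - K * z) with hE
  have hEdiff : Differentiable ℂ E := by
    exact W.σ_diff.mul (Differentiable.cexp (by fun_prop))
  have hEderiv : ∀ z, deriv E z = 0 := by
    intro z
    rw [hE]
    rw [deriv_fun_mul (W.σ_diff z) (DifferentiableAt.cexp (by fun_prop))]
    rw [deriv_cexp (by fun_prop)]
    have hder : deriv (fun z : ℂ => c * z ^ 2 / 2 - K * z) z = c * z - K := by
      rw [deriv_fun_sub (by fun_prop) (by fun_prop)]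
      rw [deriv_div_const, deriv_const_mul _ (by fun_prop), deriv_const_mul _ (by fun_prop)]
      simp [deriv_pow]
      ring
    rw [hder, hσ' z]
    ring
  have hEconst : ∀ z, E z = E 0 := by
    intro z
    exact is_const_of_deriv_eq_zero hEdiff hEderiv z 0
  have hσ0 : W.σ 0 = 0 := (W.σ_zero 0).2 (zero_mem_gamma W)
  have hE0 : E 0 = 0 := by simp [hE, hσ0]
  have hσall : ∀ z, W.σ z = 0 := by
    intro z
    have := hEconst z
    rw [hE0, hE] at this
    exact (mul_eq_zero.1 this).resolve_right (Complex.exp_ne_zero _)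
  have : deriv W.σ 0 = 0 := by
    have : W.σ = fun _ => 0 := funext hσall
    rw [this]
    simp
  rw [W.σ_deriv_zero] at this
  exact one_ne_zero this

end MiuraProof
namespace MiuraProof

open Metric Filter Topology Set

lemma wp_second_deriv (W : WeierstrassData) {l2 l1 l0 : ℂ} (hL : W.OnCurveL l2 l1 l0)
    {z : ℂ} (hz : z ∉ W.Γ) :
    deriv (deriv W.℘) z = 6 * (W.℘ z) ^ 2 + 4 * l2 * W.℘ z + 2 * l1 := by
  have hz' : z ∈ W.Γᶜ := hz
  have key : ∀ w ∈ W.Γᶜ, deriv W.℘ w *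
      (deriv (deriv W.℘) w - (6 * (W.℘ w) ^ 2 + 4 * l2 * W.℘ w + 2 * l1)) = 0 := by
    intro w hw
    have hp := (W.℘_diff w hw).hasDerivAt
    have hq := (W.℘_diff2 w hw).hasDerivAt
    have hR : HasDerivAt (fun t => (W.℘ t) ^ 3 + l2 * (W.℘ t) ^ 2 + l1 * W.℘ t + l0)
        ((((3 : ℕ) : ℂ) * (W.℘ w) ^ 2 * deriv W.℘ w
          + l2 * (((2 : ℕ) : ℂ) * (W.℘ w) ^ 1 * deriv W.℘ w)) + l1 * deriv W.℘ w) w :=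
      (((hp.pow 3).add ((hp.pow 2).const_mul l2)).add (hp.const_mul l1)).add_const l0
    have hLHS : HasDerivAt (fun t => (deriv W.℘ t / 2) ^ 2)
        (((2 : ℕ) : ℂ) * (deriv W.℘ w / 2) ^ 1 * (deriv (deriv W.℘) w / 2)) w :=
      (hq.div_const 2).pow 2
    have heq : (fun t => (deriv W.℘ t / 2) ^ 2) =ᶠ[𝓝 w]
        (fun t => (W.℘ t) ^ 3 + l2 * (W.℘ t) ^ 2 + l1 * W.℘ t + l0) := by
      filter_upwards [(gammac_open W).mem_nhds hw] with t ht
      exact hL t ht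
    have hde := heq.deriv_eq
    rw [hLHS.deriv, hR.deriv] at hde
    push_cast at hde
    linear_combination 2 * hde
  rcases (wp1_anal W z hz').eventually_eq_zero_or_eventually_ne_zero with hcase | hcase
  · exfalso
    apply wp_deriv_not_identically_zero W
    exact AnalyticOnNhd.eqOn_of_preconnected_of_eventuallyEq (wp1_anal W)
      analyticOnNhd_const (gammac_preconnected W) hz' hcase
  · have hmem : ∀ᶠ t in 𝓝[≠] z, t ∈ W.Γᶜ :=
      eventually_mem_set.2 (mem_nhdsWithin_of_mem_nhds ((gammac_open W).mem_nhds hz'))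
    have hev : ∀ᶠ t in 𝓝[≠] z, deriv (deriv W.℘) t
        = 6 * (W.℘ t) ^ 2 + 4 * l2 * W.℘ t + 2 * l1 := by
      filter_upwards [hcase, hmem] with t ht1 ht2
      rcases mul_eq_zero.1 (key t ht2) with h | h
      · exact absurd h ht1
      · exact sub_eq_zero.1 h
    have hc1 : Tendsto (deriv (deriv W.℘)) (𝓝[≠] z) (𝓝 (deriv (deriv W.℘) z)) :=
      ((wp2_anal W z hz').continuousAt.continuousWithinAt).tendsto
    have hcp : ContinuousAt W.℘ z := (wp_anal W z hz').continuousAt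
    have hc2 : Tendsto (fun t => 6 * (W.℘ t) ^ 2 + 4 * l2 * W.℘ t + 2 * l1) (𝓝[≠] z)
        (𝓝 (6 * (W.℘ z) ^ 2 + 4 * l2 * W.℘ z + 2 * l1)) := by
      have : ContinuousAt (fun t => 6 * (W.℘ t) ^ 2 + 4 * l2 * W.℘ t + 2 * l1) z :=
        ((continuousAt_const.mul (hcp.pow 2)).add
          ((continuousAt_const.mul hcp))).add continuousAt_const
      exact this.continuousWithinAt.tendsto
    exact tendsto_nhds_unique hc1 (hc2.congr' (EventuallyEq.symm hev))

end MiuraProof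
namespace MiuraProof

open Metric Filter Topology Set

lemma eq_zero_of_self_eq_neg {x : ℂ} (h : x = -x) : x = 0 := by
  have h2 : (2 : ℂ) * x = 0 := by linear_combination h
  rcases mul_eq_zero.1 h2 with h3 | h3
  · norm_num at h3
  · exact h3

/-- `σ₁ z = σ z / z` (with `σ₁ 0 = σ'(0) = 1`). -/
noncomputable def sig1 (W : WeierstrassData) : ℂ → ℂ := dslope W.σ 0

lemma sig1_zero (W : WeierstrassData) : sig1 W 0 = 1 := by
  rw [sig1, dslope_same, W.σ_deriv_zero]

lemma sigma_zero' (W : WeierstrassData) : W.σ 0 = 0 := (W.σ_zero 0).2 (zero_mem_gamma W)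

lemma sigma_eq_mul (W : WeierstrassData) (z : ℂ) : W.σ z = z * sig1 W z := by
  rcases eq_or_ne z 0 with rfl | hz
  · simp [sigma_zero' W]
  · rw [sig1, dslope_of_ne _ hz, slope_def_field, sigma_zero' W]
    field_simp
    ring

lemma sig1_diff (W : WeierstrassData) : Differentiable ℂ (sig1 W) := by
  intro x
  rcases eq_or_ne x 0 with rfl | hx
  · obtain ⟨p, hp⟩ := W.σ_diff.analyticAt 0
    exact (hp.has_fpower_series_dslope_fslope).analyticAt.differentiableAt
  · exact (differentiableAt_dslope_of_ne hx).2 (W.σ_diff x)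

lemma sig1_even (W : WeierstrassData) (z : ℂ) : sig1 W (-z) = sig1 W z := by
  rcases eq_or_ne z 0 with rfl | hz
  · simp
  · have h1 := sigma_eq_mul W (-z)
    rw [W.σ_odd z, sigma_eq_mul W z] at h1
    have h2 : z * sig1 W (-z) = z * sig1 W z := by linear_combination h1
    exact mul_left_cancel₀ hz h2

lemma sig1_deriv_odd (W : WeierstrassData) (z : ℂ) :
    deriv (sig1 W) (-z) = - deriv (sig1 W) z := by
  have h : (fun x : ℂ => sig1 W (-x)) = sig1 W := funext fun x => sig1_even W x
  have h2 : deriv (fun x : ℂ => sig1 W (-x)) z = - deriv (sig1 W) (-z) :=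
    deriv_comp_neg (sig1 W) z
  rw [h] at h2
  linear_combination h2

/-- `g = σ₁'/σ₁`, so that `ζ z = 1/z + g z` near `0`. -/
noncomputable def gg (W : WeierstrassData) : ℂ → ℂ :=
  fun z => deriv (sig1 W) z / sig1 W z

lemma gg_odd (W : WeierstrassData) (z : ℂ) : gg W (-z) = - gg W z := by
  rw [gg, gg, sig1_deriv_odd, sig1_even, neg_div]

lemma gg_zero (W : WeierstrassData) : gg W 0 = 0 := by
  have h := gg_odd W 0
  rw [neg_zero] at h
  exact eq_zero_of_self_eq_neg h

lemma gg_deriv_even (W : WeierstrassData) (z : ℂ) :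
    deriv (gg W) (-z) = deriv (gg W) z := by
  have h : (fun x : ℂ => gg W (-x)) = (fun x : ℂ => - gg W x) :=
    funext fun x => gg_odd W x
  have h2 : deriv (fun x : ℂ => gg W (-x)) z = - deriv (gg W) (-z) :=
    deriv_comp_neg (gg W) z
  rw [h] at h2
  have h3 : deriv (fun x : ℂ => - gg W x) z = - deriv (gg W) z := deriv.neg
  rw [h3] at h2
  linear_combination h2

lemma gg_dd_odd (W : WeierstrassData) (z : ℂ) :
    deriv (deriv (gg W)) (-z) = - deriv (deriv (gg W)) z := by
  have h : (fun x : ℂ => deriv (gg W) (-x)) = deriv (gg W) :=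
    funext fun x => gg_deriv_even W x
  have h2 : deriv (fun x : ℂ => deriv (gg W) (-x)) z = - deriv (deriv (gg W)) (-z) :=
    deriv_comp_neg (deriv (gg W)) z
  rw [h] at h2
  linear_combination h2

lemma gg_dd_zero (W : WeierstrassData) : deriv (deriv (gg W)) 0 = 0 := by
  have h := gg_dd_odd W 0
  rw [neg_zero] at h
  exact eq_zero_of_self_eq_neg h

end MiuraProof
namespace MiuraProof

open Metric Filter Topology Set

set_option maxHeartbeats 4000000 in
lemma A_eq_zero (W : WeierstrassData) {l2 l1 l0 : ℂ} (hL : W.OnCurveL l2 l1 l0)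
    {v : ℂ} (hv : v ∉ W.Γ) {u : ℂ} (hu : u ∈ Om W v) :
    (W.ζ (u + v) - W.ζ u - W.ζ v) ^ 2 = W.℘ u + W.℘ (u + v) + W.℘ v + l2 := by
  -- the Weierstrass functions and auxiliary data
  set m : ℂ → ℂ := fun w => W.ζ (w + v) - W.ζ w - W.ζ v with hm_def
  set B : ℂ → ℂ := fun w =>
    2 * m w * (W.℘ w - W.℘ (w + v)) - deriv W.℘ w - deriv W.℘ (w + v) with hB_def
  set A : ℂ → ℂ := fun w =>
    m w ^ 2 - W.℘ w - W.℘ (w + v) - W.℘ v - l2 with hA_def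
  -- choice of radius r
  obtain ⟨r, hr0, hrs, hrv, hrg⟩ : ∃ r : ℝ, 0 < r ∧ (∀ z ∈ ball (0:ℂ) r, sig1 W z ≠ 0) ∧
      (∀ z ∈ ball (0:ℂ) r, z + v ∉ W.Γ) ∧ (∀ z ∈ ball (0:ℂ) r, z ≠ 0 → z ∉ W.Γ) := by
    have h1 : ∀ᶠ z in 𝓝 (0:ℂ), sig1 W z ≠ 0 :=
      ((sig1_diff W).continuous.continuousAt).eventually_ne
        (by rw [sig1_zero]; exact one_ne_zero)
    have h2 : ∀ᶠ z in 𝓝 (0:ℂ), z + v ∉ W.Γ := by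
      have hc : Continuous (fun z : ℂ => z + v) := by continuity
      have h3 : IsOpen ((fun z : ℂ => z + v) ⁻¹' W.Γᶜ) := (gammac_open W).preimage hc
      have h4 : (0:ℂ) ∈ (fun z : ℂ => z + v) ⁻¹' W.Γᶜ := by
        simp only [Set.mem_preimage, zero_add]
        exact hv
      filter_upwards [h3.mem_nhds h4] with z hz using hz
    obtain ⟨r, hr0, hr⟩ := Metric.eventually_nhds_iff_ball.1 (h1.and h2)
    refine ⟨r, hr0, fun z hz => (hr z hz).1, fun z hz => (hr z hz).2, ?_⟩
    intro z hz hzne hmem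
    have hσz := (W.σ_zero z).2 hmem
    rw [sigma_eq_mul W z] at hσz
    exact (mul_ne_zero hzne (hr z hz).1) hσz
  have h0ball : (0:ℂ) ∈ ball (0:ℂ) r := mem_ball_self hr0
  -- g = σ₁'/σ₁ and its properties
  set g : ℂ → ℂ := gg W with hg_def
  have hds1 : Differentiable ℂ (deriv (sig1 W)) := fun x =>
    (((sig1_diff W).differentiableOn.analyticOnNhd isOpen_univ).deriv_of_isOpen
      isOpen_univ x (mem_univ x)).differentiableAt
  have hg_diffAt : ∀ x ∈ ball (0:ℂ) r, DifferentiableAt ℂ g x := fun x hx =>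
    (hds1 x).div (sig1_diff W x) (hrs x hx)
  have hg_anal : AnalyticOnNhd ℂ g (ball (0:ℂ) r) := by
    have h : DifferentiableOn ℂ g (ball (0:ℂ) r) :=
      fun x hx => (hg_diffAt x hx).differentiableWithinAt
    exact h.analyticOnNhd isOpen_ball
  have hg1_anal : AnalyticOnNhd ℂ (deriv g) (ball (0:ℂ) r) :=
    hg_anal.deriv_of_isOpen isOpen_ball
  have hg2_anal : AnalyticOnNhd ℂ (deriv (deriv g)) (ball (0:ℂ) r) :=
    hg1_anal.deriv_of_isOpen isOpen_ball
  -- φ and ψ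
  set φ : ℂ → ℂ := fun w => W.ζ (w + v) - W.ζ v - g w with hφ_def
  have hφ0 : φ 0 = 0 := by
    simp only [hφ_def, zero_add, hg_def, gg_zero W]
    ring
  have hφ_diffAt : ∀ x ∈ ball (0:ℂ) r, DifferentiableAt ℂ φ x := by
    intro x hx
    have h1 : DifferentiableAt ℂ (fun w : ℂ => W.ζ (w + v)) x :=
      ((W.ζ_diff (x + v) (hrv x hx)).hasDerivAt.comp_add_const x v).differentiableAt
    exact (h1.sub_const _).sub (hg_diffAt x hx)
  have hφ_anal : AnalyticOnNhd ℂ φ (ball (0:ℂ) r) := by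
    have h : DifferentiableOn ℂ φ (ball (0:ℂ) r) :=
      fun x hx => (hφ_diffAt x hx).differentiableWithinAt
    exact h.analyticOnNhd isOpen_ball
  have hφ1_anal : AnalyticOnNhd ℂ (deriv φ) (ball (0:ℂ) r) :=
    hφ_anal.deriv_of_isOpen isOpen_ball
  set ψ : ℂ → ℂ := dslope φ 0 with hψ_def
  have hφψ : ∀ w, φ w = w * ψ w := by
    intro w
    rcases eq_or_ne w 0 with rfl | hw
    · simp [hφ0]
    · rw [hψ_def, dslope_of_ne _ hw, slope_def_field, hφ0]
      field_simp
      ring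
  have hψ_diffAt : ∀ x ∈ ball (0:ℂ) r, DifferentiableAt ℂ ψ x := by
    intro x hx
    rcases eq_or_ne x 0 with rfl | hx0
    · obtain ⟨pp, hpp⟩ := hφ_anal 0 h0ball
      exact hpp.has_fpower_series_dslope_fslope.analyticAt.differentiableAt
    · exact (differentiableAt_dslope_of_ne hx0).2 (hφ_diffAt x hx)
  have hψ_anal : AnalyticOnNhd ℂ ψ (ball (0:ℂ) r) := by
    have h : DifferentiableOn ℂ ψ (ball (0:ℂ) r) :=
      fun x hx => (hψ_diffAt x hx).differentiableWithinAt
    exact h.analyticOnNhd isOpen_ball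
  have hψ1_anal : AnalyticOnNhd ℂ (deriv ψ) (ball (0:ℂ) r) :=
    hψ_anal.deriv_of_isOpen isOpen_ball
  have hφ'_eq : ∀ x ∈ ball (0:ℂ) r, deriv φ x = ψ x + x * deriv ψ x := by
    intro x hx
    have h1 : HasDerivAt (fun w : ℂ => w * ψ w) (1 * ψ x + x * deriv ψ x) x :=
      (hasDerivAt_id x).mul (hψ_diffAt x hx).hasDerivAt
    have h2 : φ = fun w : ℂ => w * ψ w := funext hφψ
    rw [h2, h1.deriv]; ring
  have hφ'v : ∀ x ∈ ball (0:ℂ) r, deriv φ x = - W.℘ (x + v) - deriv g x := by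
    intro x hx
    have h1 : HasDerivAt (fun w : ℂ => W.ζ (w + v)) (deriv W.ζ (x + v)) x :=
      ((W.ζ_diff (x + v) (hrv x hx)).hasDerivAt).comp_add_const x v
    have h2 : HasDerivAt φ (deriv W.ζ (x + v) - deriv g x) x := by
      rw [hφ_def]
      exact (h1.sub_const _).sub (hg_diffAt x hx).hasDerivAt
    rw [h2.deriv, deriv_zeta W (hrv x hx)]
  have hφ'0 : deriv φ 0 = - W.℘ v - deriv g 0 := by
    have := hφ'v 0 h0ball
    rwa [zero_add] at this
  have hψ0 : ψ 0 = deriv φ 0 := dslope_same φ 0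
  have hφ''0 : deriv (deriv φ) 0 = 2 * deriv ψ 0 := by
    have hev : deriv φ =ᶠ[𝓝 (0:ℂ)] (fun w => ψ w + w * deriv ψ w) := by
      filter_upwards [isOpen_ball.mem_nhds h0ball] with x hx using hφ'_eq x hx
    rw [hev.deriv_eq]
    have h1 : HasDerivAt (fun w : ℂ => ψ w + w * deriv ψ w)
        (deriv ψ 0 + (1 * deriv ψ 0 + 0 * deriv (deriv ψ) 0)) 0 :=
      ((hψ_diffAt 0 h0ball).hasDerivAt).add
        ((hasDerivAt_id 0).mul ((hψ1_anal 0 h0ball).differentiableAt.hasDerivAt))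
    rw [h1.deriv]; ring
  -- local formulas on the punctured ball
  have hzeta_eq : ∀ w ∈ ball (0:ℂ) r, w ≠ 0 → W.ζ w = w⁻¹ + g w := by
    intro w hw hw0
    have hwn : w ∉ W.Γ := hrg w hw hw0
    have hσw : W.σ w ≠ 0 := fun h => hwn ((W.σ_zero w).1 h)
    have hσd : deriv W.σ w = sig1 W w + w * deriv (sig1 W) w := by
      have h2 : W.σ = fun t : ℂ => t * sig1 W t := funext (sigma_eq_mul W)
      have h1 : HasDerivAt (fun t : ℂ => t * sig1 W t)
          (1 * sig1 W w + w * deriv (sig1 W) w) w :=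
        (hasDerivAt_id w).mul (sig1_diff W w).hasDerivAt
      rw [h2, h1.deriv]; ring
    rw [W.ζ_def w hwn, hσd, sigma_eq_mul W w, hg_def]
    rw [gg]
    have hsw := hrs w hw
    field_simp
  have hwp_eq : ∀ w ∈ ball (0:ℂ) r, w ≠ 0 → W.℘ w = (w ^ 2)⁻¹ - deriv g w := by
    intro w hw hw0
    have hwn : w ∉ W.Γ := hrg w hw hw0
    have hopen : IsOpen (ball (0:ℂ) r \ {0}) := isOpen_ball.sdiff isClosed_singleton
    have hev : W.ζ =ᶠ[𝓝 w] (fun t => t⁻¹ + g t) := by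
      filter_upwards [hopen.mem_nhds ⟨hw, hw0⟩] with t ht
      exact hzeta_eq t ht.1 ht.2
    have h1 : HasDerivAt (fun t : ℂ => t⁻¹ + g t) (-(w ^ 2)⁻¹ + deriv g w) w :=
      (hasDerivAt_inv hw0).add (hg_diffAt w hw).hasDerivAt
    rw [W.℘_def w hwn, hev.deriv_eq, h1.deriv]
    ring
  have hwp1_eq : ∀ w ∈ ball (0:ℂ) r, w ≠ 0 →
      deriv W.℘ w = -(2 * w) / (w ^ 2) ^ 2 - deriv (deriv g) w := by
    intro w hw hw0
    have hopen : IsOpen (ball (0:ℂ) r \ {0}) := isOpen_ball.sdiff isClosed_singleton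
    have hev : W.℘ =ᶠ[𝓝 w] (fun t => (t ^ 2)⁻¹ - deriv g t) := by
      filter_upwards [hopen.mem_nhds ⟨hw, hw0⟩] with t ht
      exact hwp_eq t ht.1 ht.2
    have hp2 : HasDerivAt (fun t : ℂ => t ^ 2) (2 * w ^ 1) w := by
      simpa using hasDerivAt_pow 2 w
    have h1 : HasDerivAt (fun t : ℂ => (t ^ 2)⁻¹ - deriv g t)
        (-(2 * w ^ 1) / (w ^ 2) ^ 2 - deriv (deriv g) w) w :=
      (hp2.inv (pow_ne_zero 2 hw0)).sub ((hg1_anal w hw).differentiableAt.hasDerivAt)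
    rw [hev.deriv_eq, h1.deriv]
    ring
  have hwpv_eq : ∀ w ∈ ball (0:ℂ) r, W.℘ (w + v) = - deriv φ w - deriv g w := by
    intro w hw
    have := hφ'v w hw
    linear_combination this
  have hwp1v_eq : ∀ w ∈ ball (0:ℂ) r,
      deriv W.℘ (w + v) = -(deriv (deriv φ) w) - deriv (deriv g) w := by
    intro w hw
    have hshift : deriv (fun t : ℂ => W.℘ (t + v)) w = deriv W.℘ (w + v) :=
      deriv_comp_add_const W.℘ v w
    have hev : (fun t : ℂ => W.℘ (t + v)) =ᶠ[𝓝 w]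
        (fun t => - deriv φ t - deriv g t) := by
      filter_upwards [isOpen_ball.mem_nhds hw] with t ht
      exact hwpv_eq t ht
    have h1 : HasDerivAt (fun t : ℂ => - deriv φ t - deriv g t)
        (-(deriv (deriv φ) w) - deriv (deriv g) w) w :=
      ((hφ1_anal w hw).differentiableAt.hasDerivAt.neg).sub
        ((hg1_anal w hw).differentiableAt.hasDerivAt)
    rw [← hshift, hev.deriv_eq, h1.deriv]
  -- refined radius r' and the punctured ball s
  obtain ⟨r', hr'0, hr'⟩ : ∃ r' : ℝ, 0 < r' ∧ ∀ w ∈ ball (0:ℂ) r',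
      (1 + w ^ 2 * deriv φ w ≠ 0 ∧ w ∈ ball (0:ℂ) r) := by
    have hc : ContinuousAt (fun w : ℂ => 1 + w ^ 2 * deriv φ w) 0 := by
      have h1 : ContinuousAt (deriv φ) 0 := (hφ1_anal 0 h0ball).continuousAt
      fun_prop
    have h2 : ∀ᶠ w in 𝓝 (0:ℂ), 1 + w ^ 2 * deriv φ w ≠ 0 := by
      apply hc.eventually_ne
      simp
    have h3 : ∀ᶠ w in 𝓝 (0:ℂ), w ∈ ball (0:ℂ) r :=
      eventually_mem_set.2 (isOpen_ball.mem_nhds h0ball)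
    obtain ⟨r', hr'0, hr'⟩ := Metric.eventually_nhds_iff_ball.1 (h2.and h3)
    exact ⟨r', hr'0, hr'⟩
  set s : Set ℂ := ball (0:ℂ) r' \ {0} with hs_def
  have hs1 : ∀ w ∈ s, w ∈ ball (0:ℂ) r := fun w hw => (hr' w hw.1).2
  have hs2 : ∀ w ∈ s, w ≠ 0 := fun w hw => hw.2
  have hsOm : s ⊆ Om W v := fun w hw =>
    ⟨hrg w (hs1 w hw) (hs2 w hw), hrv w (hs1 w hw)⟩
  have hsopen : IsOpen s := isOpen_ball.sdiff isClosed_singleton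
  have hFne : (𝓝[s] (0:ℂ)).NeBot := by
    have h1 : s = {(0:ℂ)}ᶜ ∩ ball (0:ℂ) r' := by
      rw [hs_def, Set.diff_eq, Set.inter_comm]
    have h2 : 𝓝[s] (0:ℂ) = 𝓝[≠] (0:ℂ) := by
      rw [h1]
      exact (nhdsWithin_restrict' _ (ball_mem_nhds (0:ℂ) hr'0)).symm
    rw [h2]
    exact Filter.NeBot.mono (by infer_instance) (le_refl _)
  have hsmem : ∀ᶠ w in 𝓝[s] (0:ℂ), w ∈ s := eventually_mem_nhdsWithin
  -- difference of ℘'s on s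
  have hpq : ∀ w ∈ s, W.℘ w - W.℘ (w + v) = (1 + w ^ 2 * deriv φ w) / w ^ 2 := by
    intro w hw
    rw [hwp_eq w (hs1 w hw) (hs2 w hw), hwpv_eq w (hs1 w hw)]
    have hw2 : (w : ℂ) ^ 2 ≠ 0 := pow_ne_zero 2 (hs2 w hw)
    have hw0 := hs2 w hw
    field_simp
    ring
  have hpq_ne : ∀ w ∈ s, W.℘ w - W.℘ (w + v) ≠ 0 := by
    intro w hw
    rw [hpq w hw]
    exact div_ne_zero (hr' w hw.1).1 (pow_ne_zero 2 (hs2 w hw))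
  -- m on s
  have hm_eq : ∀ w ∈ s, m w = φ w - w⁻¹ := by
    intro w hw
    simp only [hm_def, hφ_def]
    rw [hzeta_eq w (hs1 w hw) (hs2 w hw)]
    ring
  -- l2 = 3 g'(0)
  have hg'c : ContinuousAt (deriv g) 0 := (hg1_anal 0 h0ball).continuousAt
  have hg''c : ContinuousAt (deriv (deriv g)) 0 := (hg2_anal 0 h0ball).continuousAt
  have hl2 : l2 = 3 * deriv g 0 := by
    set X : ℂ → ℂ := fun w => w ^ 4 * ((deriv W.℘ w / 2) ^ 2 - (W.℘ w) ^ 3) with hX_def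
    have t1 : Tendsto X (𝓝[s] (0:ℂ)) (𝓝 l2) := by
      have heq1 : ∀ w ∈ s, X w = l2 * (1 - w ^ 2 * deriv g w) ^ 2
          + l1 * (w ^ 2 * (1 - w ^ 2 * deriv g w)) + l0 * w ^ 4 := by
        intro w hw
        have hw0 := hs2 w hw
        have hwb := hs1 w hw
        have hcur := hL w (hrg w hwb hw0)
        have hp := hwp_eq w hwb hw0
        have h2 : (w:ℂ) ^ 2 ≠ 0 := pow_ne_zero 2 hw0
        have h3 : X w = w ^ 4 * (l2 * (W.℘ w) ^ 2 + l1 * W.℘ w + l0) := by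
          rw [hX_def]
          linear_combination w ^ 4 * hcur
        rw [h3, hp]
        field_simp
      have hc : ContinuousAt (fun w : ℂ => l2 * (1 - w ^ 2 * deriv g w) ^ 2
          + l1 * (w ^ 2 * (1 - w ^ 2 * deriv g w)) + l0 * w ^ 4) 0 := by
        have h1 : ContinuousAt (deriv g) 0 := hg'c
        fun_prop
      have ht := (hc.continuousWithinAt (s := s)).tendsto
      have h0 : l2 * (1 - (0:ℂ) ^ 2 * deriv g 0) ^ 2
          + l1 * ((0:ℂ) ^ 2 * (1 - (0:ℂ) ^ 2 * deriv g 0)) + l0 * (0:ℂ) ^ 4 = l2 := by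
        norm_num
      rw [h0] at ht
      apply ht.congr'
      filter_upwards [hsmem] with w hw
      exact (heq1 w hw).symm
    have t2 : Tendsto X (𝓝[s] (0:ℂ)) (𝓝 (3 * deriv g 0)) := by
      have heq2 : ∀ w ∈ s, X w = w * deriv (deriv g) w
          + w ^ 4 * (deriv (deriv g) w) ^ 2 / 4 + 3 * deriv g w
          - 3 * w ^ 2 * (deriv g w) ^ 2 + w ^ 4 * (deriv g w) ^ 3 := by
        intro w hw
        have hw0 := hs2 w hw
        have hwb := hs1 w hw
        rw [hX_def]
        simp only []
        rw [hwp1_eq w hwb hw0, hwp_eq w hwb hw0]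
        have h2 : (w:ℂ) ^ 2 ≠ 0 := pow_ne_zero 2 hw0
        field_simp
        ring
      have hc : ContinuousAt (fun w : ℂ => w * deriv (deriv g) w
          + w ^ 4 * (deriv (deriv g) w) ^ 2 / 4 + 3 * deriv g w
          - 3 * w ^ 2 * (deriv g w) ^ 2 + w ^ 4 * (deriv g w) ^ 3) 0 := by
        have h1 : ContinuousAt (deriv g) 0 := hg'c
        have h2 : ContinuousAt (deriv (deriv g)) 0 := hg''c
        fun_prop
      have ht := (hc.continuousWithinAt (s := s)).tendsto
      have h0 : (0:ℂ) * deriv (deriv g) 0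
          + (0:ℂ) ^ 4 * (deriv (deriv g) 0) ^ 2 / 4 + 3 * deriv g 0
          - 3 * (0:ℂ) ^ 2 * (deriv g 0) ^ 2 + (0:ℂ) ^ 4 * (deriv g 0) ^ 3
          = 3 * deriv g 0 := by
        norm_num
      rw [h0] at ht
      apply ht.congr'
      filter_upwards [hsmem] with w hw
      exact (heq2 w hw).symm
    exact tendsto_nhds_unique t1 t2
  -- limits
  have hφ2_anal : AnalyticOnNhd ℂ (deriv (deriv φ)) (ball (0:ℂ) r) :=
    hφ1_anal.deriv_of_isOpen isOpen_ball
  have hφc : ContinuousAt φ 0 := (hφ_anal 0 h0ball).continuousAt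
  have hψc : ContinuousAt ψ 0 := (hψ_anal 0 h0ball).continuousAt
  have hψ'c : ContinuousAt (deriv ψ) 0 := (hψ1_anal 0 h0ball).continuousAt
  have hφ'c : ContinuousAt (deriv φ) 0 := (hφ1_anal 0 h0ball).continuousAt
  have hφ''c : ContinuousAt (deriv (deriv φ)) 0 := (hφ2_anal 0 h0ball).continuousAt
  have hAlim : Tendsto A (𝓝[s] (0:ℂ)) (𝓝 0) := by
    have heqA : ∀ w ∈ s, A w = φ w ^ 2 - 2 * ψ w + 2 * deriv g w + deriv φ w
        - W.℘ v - l2 := by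
      intro w hw
      have hw0 := hs2 w hw
      have hwb := hs1 w hw
      rw [hA_def]
      simp only []
      rw [hm_eq w hw, hwp_eq w hwb hw0, hwpv_eq w hwb, hφψ w]
      field_simp
      ring
    have hc : ContinuousAt (fun w : ℂ => φ w ^ 2 - 2 * ψ w + 2 * deriv g w
        + deriv φ w - W.℘ v - l2) 0 := by
      have h1 := hφc; have h2 := hψc; have h3 := hg'c; have h4 := hφ'c
      fun_prop
    have ht := (hc.continuousWithinAt (s := s)).tendsto
    have h0 : φ 0 ^ 2 - 2 * ψ 0 + 2 * deriv g 0 + deriv φ 0 - W.℘ v - l2 = 0 := by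
      rw [hφ0, hψ0, hφ'0, hl2]
      ring
    rw [h0] at ht
    apply ht.congr'
    filter_upwards [hsmem] with w hw
    exact (heqA w hw).symm
  have hBlim : Tendsto B (𝓝[s] (0:ℂ)) (𝓝 0) := by
    have heqB : ∀ w ∈ s, B w = 2 * (w * ψ w) * (ψ w + w * deriv ψ w) - 2 * deriv ψ w
        + 2 * deriv (deriv g) w + deriv (deriv φ) w := by
      intro w hw
      have hw0 := hs2 w hw
      have hwb := hs1 w hw
      rw [hB_def]
      simp only []
      rw [hm_eq w hw, hwp_eq w hwb hw0, hwpv_eq w hwb, hwp1_eq w hwb hw0,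
        hwp1v_eq w hwb, hφψ w, hφ'_eq w hwb]
      field_simp
      ring
    have hc : ContinuousAt (fun w : ℂ => 2 * (w * ψ w) * (ψ w + w * deriv ψ w)
        - 2 * deriv ψ w + 2 * deriv (deriv g) w + deriv (deriv φ) w) 0 := by
      have h1 := hψc; have h2 := hψ'c; have h3 := hg''c; have h4 := hφ''c
      fun_prop
    have ht := (hc.continuousWithinAt (s := s)).tendsto
    have h0 : 2 * ((0:ℂ) * ψ 0) * (ψ 0 + 0 * deriv ψ 0) - 2 * deriv ψ 0
        + 2 * deriv (deriv g) 0 + deriv (deriv φ) 0 = 0 := by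
      rw [hφ''0, hg_def, gg_dd_zero W]
      ring
    rw [h0] at ht
    apply ht.congr'
    filter_upwards [hsmem] with w hw
    exact (heqB w hw).symm
  have hIlim : Tendsto (fun w => (W.℘ w - W.℘ (w + v))⁻¹) (𝓝[s] (0:ℂ)) (𝓝 0) := by
    have heqI : ∀ w ∈ s, (W.℘ w - W.℘ (w + v))⁻¹ = w ^ 2 / (1 + w ^ 2 * deriv φ w) := by
      intro w hw
      rw [hpq w hw, inv_div]
    have hc : ContinuousAt (fun w : ℂ => w ^ 2 / (1 + w ^ 2 * deriv φ w)) 0 := by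
      apply ContinuousAt.div
      · fun_prop
      · have h1 := hφ'c
        fun_prop
      · norm_num
    have ht := (hc.continuousWithinAt (s := s)).tendsto
    have h0 : ((0:ℂ)) ^ 2 / (1 + (0:ℂ) ^ 2 * deriv φ 0) = 0 := by norm_num
    rw [h0] at ht
    apply ht.congr'
    filter_upwards [hsmem] with w hw
    exact (heqI w hw).symm
  -- global differentiability on Om and derivative formulas
  have hm_hasDeriv : ∀ z ∈ Om W v, HasDerivAt m (W.℘ z - W.℘ (z + v)) z := by
    intro z hz
    have h1 : HasDerivAt (fun w : ℂ => W.ζ (w + v)) (deriv W.ζ (z + v)) z :=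
      ((W.ζ_diff (z + v) hz.2).hasDerivAt).comp_add_const z v
    have h2 := (W.ζ_diff z hz.1).hasDerivAt
    have h3 := (h1.sub h2).sub_const (W.ζ v)
    have h4 : HasDerivAt m (deriv W.ζ (z + v) - deriv W.ζ z) z := by
      rw [hm_def]; exact h3
    convert h4 using 1
    rw [deriv_zeta W hz.2, deriv_zeta W hz.1]
    ring
  have hB_hasDeriv : ∀ z ∈ Om W v, HasDerivAt B
      (2 * (W.℘ z - W.℘ (z + v)) ^ 2 + 2 * m z * (deriv W.℘ z - deriv W.℘ (z + v))
        - deriv (deriv W.℘) z - deriv (deriv W.℘) (z + v)) z := by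
    intro z hz
    have hp := (W.℘_diff z hz.1).hasDerivAt
    have hq : HasDerivAt (fun w : ℂ => W.℘ (w + v)) (deriv W.℘ (z + v)) z :=
      ((W.℘_diff (z + v) hz.2).hasDerivAt).comp_add_const z v
    have hp1 := (W.℘_diff2 z hz.1).hasDerivAt
    have hq1 : HasDerivAt (fun w : ℂ => deriv W.℘ (w + v)) (deriv (deriv W.℘) (z + v)) z :=
      ((W.℘_diff2 (z + v) hz.2).hasDerivAt).comp_add_const z v
    have hmz := hm_hasDeriv z hz
    have hmul : HasDerivAt (fun w : ℂ => 2 * m w * (W.℘ w - W.℘ (w + v)))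
        ((2 * (W.℘ z - W.℘ (z + v))) * (W.℘ z - W.℘ (z + v))
          + (2 * m z) * (deriv W.℘ z - deriv W.℘ (z + v))) z :=
      (hmz.const_mul 2).mul (hp.sub hq)
    have htot := (hmul.sub hp1).sub hq1
    have h4 : HasDerivAt B ((2 * (W.℘ z - W.℘ (z + v))) * (W.℘ z - W.℘ (z + v))
          + (2 * m z) * (deriv W.℘ z - deriv W.℘ (z + v))
          - deriv (deriv W.℘) z - deriv (deriv W.℘) (z + v)) z := by
      rw [hB_def]; exact htot
    convert h4 using 1
    ring
  have hA_hasDeriv : ∀ z ∈ Om W v, HasDerivAt A (B z) z := by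
    intro z hz
    have hp := (W.℘_diff z hz.1).hasDerivAt
    have hq : HasDerivAt (fun w : ℂ => W.℘ (w + v)) (deriv W.℘ (z + v)) z :=
      ((W.℘_diff (z + v) hz.2).hasDerivAt).comp_add_const z v
    have hmz := hm_hasDeriv z hz
    have hpow := hmz.pow 2
    have htot := (((hpow.sub hp).sub hq).sub_const (W.℘ v)).sub_const l2
    have h4 : HasDerivAt A (((2:ℕ) : ℂ) * m z ^ (2 - 1) * (W.℘ z - W.℘ (z + v))
        - deriv W.℘ z - deriv W.℘ (z + v)) z := by
      rw [hA_def]; exact htot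
    convert h4 using 1
    rw [hB_def]
    push_cast
    ring
  -- the key Wronskian identity
  have keyD : ∀ z ∈ Om W v, (W.℘ z - W.℘ (z + v)) *
      (2 * (W.℘ z - W.℘ (z + v)) ^ 2 + 2 * m z * (deriv W.℘ z - deriv W.℘ (z + v))
        - deriv (deriv W.℘) z - deriv (deriv W.℘) (z + v))
      = (deriv W.℘ z - deriv W.℘ (z + v)) * B z := by
    intro z hz
    have ha2 := wp_second_deriv W hL hz.1
    have hb2 := wp_second_deriv W hL hz.2
    have ha1 : (deriv W.℘ z) ^ 2
        = 4 * ((W.℘ z) ^ 3 + l2 * (W.℘ z) ^ 2 + l1 * W.℘ z + l0) := by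
      linear_combination 4 * hL z hz.1
    have hb1 : (deriv W.℘ (z + v)) ^ 2
        = 4 * ((W.℘ (z + v)) ^ 3 + l2 * (W.℘ (z + v)) ^ 2 + l1 * W.℘ (z + v) + l0) := by
      linear_combination 4 * hL (z + v) hz.2
    rw [hB_def]
    simp only []
    rw [ha2, hb2]
    linear_combination ha1 - hb1
  -- analyticity of A and B on Om
  have hB_anal : AnalyticOnNhd ℂ B (Om W v) := by
    have h : DifferentiableOn ℂ B (Om W v) :=
      fun z hz => (hB_hasDeriv z hz).differentiableAt.differentiableWithinAt
    exact h.analyticOnNhd (om_open W v)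
  have hA_anal : AnalyticOnNhd ℂ A (Om W v) := by
    have h : DifferentiableOn ℂ A (Om W v) :=
      fun z hz => (hA_hasDeriv z hz).differentiableAt.differentiableWithinAt
    exact h.analyticOnNhd (om_open W v)
  have hpq_hasDeriv : ∀ z ∈ Om W v, HasDerivAt (fun w : ℂ => W.℘ w - W.℘ (w + v))
      (deriv W.℘ z - deriv W.℘ (z + v)) z := by
    intro z hz
    exact (W.℘_diff z hz.1).hasDerivAt.sub
      (((W.℘_diff (z + v) hz.2).hasDerivAt).comp_add_const z v)
  have hpq_anal : AnalyticOnNhd ℂ (fun w : ℂ => W.℘ w - W.℘ (w + v)) (Om W v) := by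
    have h : DifferentiableOn ℂ (fun w : ℂ => W.℘ w - W.℘ (w + v)) (Om W v) :=
      fun z hz => (hpq_hasDeriv z hz).differentiableAt.differentiableWithinAt
    exact h.analyticOnNhd (om_open W v)
  -- anchor ball
  set u₁ : ℂ := ((r' / 2 : ℝ) : ℂ) with hu₁_def
  have hnu₁ : ‖u₁‖ = r' / 2 := by
    rw [hu₁_def, Complex.norm_real, Real.norm_eq_abs, abs_of_pos (by linarith)]
  have hu₁s : u₁ ∈ s := by
    constructor
    · rw [mem_ball, dist_zero_right, hnu₁]
      linarith
    · intro hx0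
      rw [Set.mem_singleton_iff] at hx0
      rw [hx0, norm_zero] at hnu₁
      linarith
  have hβ : ∀ x ∈ ball u₁ (r' / 4), x ∈ s := by
    intro x hx
    have hd : dist x u₁ < r' / 4 := mem_ball.1 hx
    constructor
    · rw [mem_ball, dist_zero_right]
      calc ‖x‖ ≤ dist x u₁ + ‖u₁‖ := by
                  simpa [dist_zero_right] using dist_triangle x u₁ 0
        _ < r' / 4 + r' / 2 := by rw [hnu₁]; linarith
        _ < r' := by linarith
    · intro hx0
      rw [Set.mem_singleton_iff] at hx0
      rw [hx0] at hd
      rw [dist_comm, dist_zero_right, hnu₁] at hd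
      linarith
  -- B = κ (℘ - ℘(·+v)) on Om
  have hr'4 : (0:ℝ) < r' / 4 := by linarith
  have hu₁ball : u₁ ∈ ball u₁ (r' / 4) := mem_ball_self hr'4
  obtain ⟨κ, hκ⟩ : ∃ κ : ℂ, Set.EqOn B (fun z => κ * (W.℘ z - W.℘ (z + v))) (Om W v) := by
    set G : ℂ → ℂ := fun w => B w / (W.℘ w - W.℘ (w + v)) with hG_def
    have hGdiff : ∀ y ∈ ball u₁ (r' / 4), DifferentiableAt ℂ G y := by
      intro y hy
      have hyOm := hsOm (hβ y hy)
      exact ((hB_hasDeriv y hyOm).differentiableAt).div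
        ((hpq_hasDeriv y hyOm).differentiableAt) (hpq_ne y (hβ y hy))
    have hGderiv : ∀ y ∈ ball u₁ (r' / 4), deriv G y = 0 := by
      intro y hy
      have hyOm := hsOm (hβ y hy)
      have hdiv := HasDerivAt.fun_div (hB_hasDeriv y hyOm) (hpq_hasDeriv y hyOm)
        (hpq_ne y (hβ y hy))
      rw [hG_def, hdiv.deriv]
      have hkey := keyD y hyOm
      have hnum : (2 * (W.℘ y - W.℘ (y + v)) ^ 2
          + 2 * m y * (deriv W.℘ y - deriv W.℘ (y + v))
          - deriv (deriv W.℘) y - deriv (deriv W.℘) (y + v)) * (W.℘ y - W.℘ (y + v))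
          - B y * (deriv W.℘ y - deriv W.℘ (y + v)) = 0 := by
        linear_combination hkey
      rw [hnum, zero_div]
    have hGconst : ∀ x ∈ ball u₁ (r' / 4), G x = G u₁ :=
      fun x hx => const_on_ball hGdiff hGderiv hx hu₁ball
    refine ⟨G u₁, ?_⟩
    apply AnalyticOnNhd.eqOn_of_preconnected_of_eventuallyEq hB_anal
      (analyticOnNhd_const.mul hpq_anal) (om_preconnected W v) (hsOm hu₁s)
    filter_upwards [isOpen_ball.mem_nhds hu₁ball] with x hx
    have h1 : B x = G x * (W.℘ x - W.℘ (x + v)) := by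
      rw [hG_def]
      exact (div_mul_cancel₀ (B x) (hpq_ne x (hβ x hx))).symm
    rw [h1, hGconst x hx]
  have hκ0 : κ = 0 := by
    have h1 : Tendsto (fun w => B w * (W.℘ w - W.℘ (w + v))⁻¹) (𝓝[s] (0:ℂ)) (𝓝 0) := by
      have h := hBlim.mul hIlim
      have h0 : (0:ℂ) * 0 = 0 := by ring
      rw [h0] at h
      exact h
    have h2 : (fun _ : ℂ => κ) =ᶠ[𝓝[s] (0:ℂ)]
        (fun w => B w * (W.℘ w - W.℘ (w + v))⁻¹) := by
      filter_upwards [hsmem] with w hw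
      rw [hκ (hsOm hw)]
      field_simp [hpq_ne w hw]
    have h3 : Tendsto (fun _ : ℂ => κ) (𝓝[s] (0:ℂ)) (𝓝 0) := h1.congr' (h2.symm)
    exact tendsto_nhds_unique tendsto_const_nhds h3
  have hBzero : ∀ z ∈ Om W v, B z = 0 := by
    intro z hz
    have := hκ hz
    simp only [hκ0, zero_mul] at this
    exact this
  -- A is constant, and the constant is 0
  have hAzero : ∀ z ∈ Om W v, A z = 0 := by
    have hAdiff : ∀ y ∈ ball u₁ (r' / 4), DifferentiableAt ℂ A y :=
      fun y hy => (hA_hasDeriv y (hsOm (hβ y hy))).differentiableAt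
    have hAderiv : ∀ y ∈ ball u₁ (r' / 4), deriv A y = 0 := by
      intro y hy
      rw [(hA_hasDeriv y (hsOm (hβ y hy))).deriv]
      exact hBzero y (hsOm (hβ y hy))
    have hAconst : ∀ x ∈ ball u₁ (r' / 4), A x = A u₁ :=
      fun x hx => const_on_ball hAdiff hAderiv hx hu₁ball
    have hAeq : Set.EqOn A (fun _ => A u₁) (Om W v) := by
      apply AnalyticOnNhd.eqOn_of_preconnected_of_eventuallyEq hA_anal
        analyticOnNhd_const (om_preconnected W v) (hsOm hu₁s)
      filter_upwards [isOpen_ball.mem_nhds hu₁ball] with x hx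
      exact hAconst x hx
    have hAu₁ : A u₁ = 0 := by
      have h2 : (fun _ : ℂ => A u₁) =ᶠ[𝓝[s] (0:ℂ)] A := by
        filter_upwards [hsmem] with w hw
        exact (hAeq (hsOm hw)).symm
      have h3 : Tendsto (fun _ : ℂ => A u₁) (𝓝[s] (0:ℂ)) (𝓝 0) := hAlim.congr' (h2.symm)
      exact tendsto_nhds_unique tendsto_const_nhds h3
    intro z hz
    rw [hAeq hz, hAu₁]
  have := hAzero u hu
  simp only [hA_def] at this
  linear_combination this

end MiuraProof
/-- The Miura relation: with `μ(u) = ζ(u+v) - ζ(u) - ζ(v)`,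
`2℘(u) + λ₂ + ℘(v) = μ² + μ'`. -/
theorem miura_relation (W : WeierstrassData) (l2 l1 l0 : ℂ)
    (hL : W.OnCurveL l2 l1 l0) (v : ℂ) (hv : v ∉ W.Γ)
    (μ : ℂ → ℂ) (hμ : ∀ u, μ u = W.ζ (u + v) - W.ζ u - W.ζ v)
    (u : ℂ) (hu : u ∉ W.Γ) (huv : u + v ∉ W.Γ) :
    2 * W.℘ u + l2 + W.℘ v = μ u ^ 2 + deriv μ u := by
  have hOm : u ∈ MiuraProof.Om W v := ⟨hu, huv⟩
  have hA := MiuraProof.A_eq_zero W hL hv hOm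
  have hfun : μ = fun w => W.ζ (w + v) - W.ζ w - W.ζ v := funext hμ
  have h1 : HasDerivAt (fun w : ℂ => W.ζ (w + v)) (deriv W.ζ (u + v)) u :=
    ((W.ζ_diff (u + v) huv).hasDerivAt).comp_add_const u v
  have h3 := (h1.sub (W.ζ_diff u hu).hasDerivAt).sub_const (W.ζ v)
  have h4 : deriv μ u = deriv W.ζ (u + v) - deriv W.ζ u := by
    rw [hfun]; exact h3.deriv
  rw [MiuraProof.deriv_zeta W huv, MiuraProof.deriv_zeta W hu] at h4
  rw [hμ u, h4]
  linear_combination -hA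
end

section
/- For a monic polynomial f of degree 2g+1 and F(x) = ∏ᵢ(x-xᵢ) with distinct roots, and x̃ with F(x̃) ≠ 0 and x̃ ≠ xᵢ, the identity Σ_{k=1}^g (1/F'(x_k))·[∂/∂x (f(x)/((x-x̃)F'(x)))]_{x=x_k} = -f(x̃)/F(x̃)² + λ_{2g} + x̃ + 2(x₁+⋯+x_g) holds as an identity of rational functions, where λ_{2g} is the coefficient of x^{2g} in f and F'(x) denotes dF/dx. -/
open Polynomial

/-- For monic `f` of degree `2g+1`, `F(x) = ∏ᵢ(x - xᵢ)` with distinct roots and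
`x̃ ∉ {x₁,…,x_g}`,
`Σₖ (1/F'(xₖ))·[d/dx(f(x)/((x-x̃)F'(x)))]ₓ₌ₓₖ
  = -f(x̃)/F(x̃)² + λ_{2g} + x̃ + 2(x₁+⋯+x_g)`. -/
theorem residue_sum_identity (g : ℕ) (x : Fin g → ℂ)
    (hx : Function.Injective x)
    (xt : ℂ) (hxt : ∀ i, xt ≠ x i)
    (f : Polynomial ℂ) (hmonic : f.Monic) (hdeg : f.natDegree = 2 * g + 1)
    (lam : ℂ) (hlam : lam = f.coeff (2 * g))
    (F : Polynomial ℂ) (hF : F = ∏ i : Fin g, (X - C (x i))) :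
    ∑ k : Fin g, (1 / F.derivative.eval (x k))
        * deriv (fun s : ℂ => f.eval s / ((s - xt) * F.derivative.eval s)) (x k)
      = - f.eval xt / F.eval xt ^ 2 + lam + xt + 2 * ∑ i : Fin g, x i := by
  classical
  -- Basic facts about F
  have hFmonic : F.Monic := by
    rw [hF]; exact monic_prod_of_monic _ _ fun i _ => monic_X_sub_C _
  have hFdeg : F.natDegree = g := by
    rw [hF, natDegree_prod _ _ (fun i _ => X_sub_C_ne_zero _)]
    simp
  have hFxt : F.eval xt ≠ 0 := by
    rw [hF, eval_prod]
    exact Finset.prod_ne_zero_iff.2 fun i _ => by simpa [sub_ne_zero] using (hxt i)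
  have hFx : ∀ k, F.eval (x k) = 0 := fun k => by
    rw [hF, eval_prod]
    exact Finset.prod_eq_zero (Finset.mem_univ k) (by simp)
  have hzx : ∀ k, x k - xt ≠ 0 := fun k => sub_ne_zero.2 fun h => hxt k h.symm
  -- Q k = F / (X - x k)
  set Q : Fin g → Polynomial ℂ := fun k => ∏ j ∈ Finset.univ.erase k, (X - C (x j)) with hQ
  have hFQ : ∀ k, F = (X - C (x k)) * Q k := fun k => by
    rw [hF, hQ]; exact (Finset.mul_prod_erase _ _ (Finset.mem_univ k)).symm
  have hQmonic : ∀ k, (Q k).Monic := fun k =>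
    monic_prod_of_monic _ _ fun i _ => monic_X_sub_C _
  have hQdeg : ∀ k, (Q k).natDegree = g - 1 := fun k => by
    rw [hQ, natDegree_prod _ _ (fun i _ => X_sub_C_ne_zero _)]
    simp [Finset.card_erase_of_mem]
  have hQk : ∀ k, (Q k).eval (x k) ≠ 0 := fun k => by
    rw [hQ]
    simp only [eval_prod, eval_sub, eval_X, eval_C]
    exact Finset.prod_ne_zero_iff.2 fun j hj => sub_ne_zero.2
      fun h => (Finset.mem_erase.1 hj).1 (hx h).symm
  have hQzero : ∀ j k : Fin g, j ≠ k → (Q j).eval (x k) = 0 := fun j k hjk => by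
    rw [hQ, eval_prod]
    exact Finset.prod_eq_zero (Finset.mem_erase.2 ⟨fun h => hjk h.symm, Finset.mem_univ k⟩)
      (by simp)
  -- D k = F'(x k), E k = Q k'(x k)
  set D : Fin g → ℂ := fun k => (Q k).eval (x k) with hDdef
  set E : Fin g → ℂ := fun k => (Q k).derivative.eval (x k) with hEdef
  have hD : ∀ k, F.derivative.eval (x k) = D k := fun k => by
    rw [hFQ k]; simp [derivative_mul, hDdef]
  have hD2 : ∀ k, F.derivative.derivative.eval (x k) = 2 * E k := fun k => by
    rw [hFQ k]; simp [derivative_mul, hEdef]; ring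
  have hDne : ∀ k, D k ≠ 0 := fun k => hQk k
  -- the constants of the partial fraction decomposition
  obtain ⟨c, hc'⟩ : ∃ c : ℂ, c * F.eval xt ^ 2 = f.eval xt :=
    ⟨f.eval xt / F.eval xt ^ 2, by field_simp⟩
  obtain ⟨b, hb'⟩ : ∃ b : Fin g → ℂ, ∀ k, b k * ((x k - xt) * D k ^ 2) = f.eval (x k) :=
    ⟨fun k => f.eval (x k) / ((x k - xt) * D k ^ 2), fun k =>
      div_mul_cancel₀ _ (mul_ne_zero (hzx k) (pow_ne_zero _ (hDne k)))⟩
  obtain ⟨a, ha'⟩ : ∃ a : Fin g → ℂ, ∀ k, a k * (((x k - xt) * D k) ^ 2 * D k)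
      = f.derivative.eval (x k) * ((x k - xt) * D k)
        - f.eval (x k) * (D k + (x k - xt) * (2 * E k)) :=
    ⟨fun k => _ / (((x k - xt) * D k) ^ 2 * D k), fun k =>
      div_mul_cancel₀ _ (mul_ne_zero (pow_ne_zero _ (mul_ne_zero (hzx k) (hDne k))) (hDne k))⟩
  -- Step A : the summands of the LHS are the a k
  have stepA : ∀ k : Fin g,
      (1 / F.derivative.eval (x k))
        * deriv (fun s : ℂ => f.eval s / ((s - xt) * F.derivative.eval s)) (x k) = a k := by
    intro k
    have hv : (x k - xt) * F.derivative.eval (x k) ≠ 0 := by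
      rw [hD k]; exact mul_ne_zero (hzx k) (hDne k)
    have h1 : HasDerivAt (fun s : ℂ => (s - xt) * F.derivative.eval s)
        (1 * F.derivative.eval (x k) + (x k - xt) * F.derivative.derivative.eval (x k)) (x k) :=
      ((hasDerivAt_id (x k)).sub_const xt).mul (F.derivative.hasDerivAt (x k))
    have h2 : deriv (fun s : ℂ => f.eval s / ((s - xt) * F.derivative.eval s)) (x k) = _ :=
      ((f.hasDerivAt (x k)).div h1 hv).deriv
    have hden : (((x k - xt) * D k) ^ 2 * D k) ≠ 0 :=
      mul_ne_zero (pow_ne_zero _ (mul_ne_zero (hzx k) (hDne k))) (hDne k)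
    apply mul_right_cancel₀ hden
    rw [ha' k, h2, hD k, hD2 k]
    have h3 := hzx k
    have h4 := hDne k
    field_simp
  -- the partial fraction polynomials
  set S : Fin g → Polynomial ℂ := fun k =>
    C (a k) * ((X - C xt) * (X - C (x k))) + C (b k) * (X - C xt) with hS
  set T : Fin g → Polynomial ℂ := fun k => S k * Q k ^ 2 with hT
  set P : Polynomial ℂ :=
    f - (X - C xt) * F ^ 2 - C c * F ^ 2 - ∑ k, T k with hP
  -- vanishing of T j and its derivative away from x j
  have hTz : ∀ j k : Fin g, j ≠ k → (T j).eval (x k) = 0 := fun j k hjk => by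
    simp [hT, hQzero j k hjk]
  have hTdz : ∀ j k : Fin g, j ≠ k → (T j).derivative.eval (x k) = 0 := fun j k hjk => by
    simp [hT, derivative_mul, derivative_pow, hQzero j k hjk]
  -- P vanishes at xt
  have hPxt : P.eval xt = 0 := by
    have hs : ∀ k : Fin g, (T k).eval xt = 0 := fun k => by simp [hT, hS]
    simp only [hP, eval_sub, eval_mul, eval_pow, eval_finset_sum, eval_C, eval_X,
      Finset.sum_congr rfl (fun k _ => hs k), Finset.sum_const_zero, sub_self, zero_mul]
    linear_combination -hc'
  -- P vanishes at x k
  have hPk : ∀ k, P.eval (x k) = 0 := by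
    intro k
    have hsum : (∑ j, T j).eval (x k) = b k * (x k - xt) * D k ^ 2 := by
      rw [eval_finset_sum, Finset.sum_eq_single k _ (by simp)]
      · simp [hT, hS, hDdef]; try ring
      · intro j _ hjk; exact hTz j k hjk
    simp only [hP, eval_sub, eval_mul, eval_pow, eval_C, eval_X, hsum, hFx k]
    linear_combination -hb' k
  -- derivative of P vanishes at x k
  have hPdk : ∀ k, P.derivative.eval (x k) = 0 := by
    intro k
    have hsum : (∑ j, (T j).derivative).eval (x k)
        = (a k * (x k - xt) + b k) * D k ^ 2 + b k * (x k - xt) * (2 * D k * E k) := by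
      rw [eval_finset_sum, Finset.sum_eq_single k _ (by simp)]
      · simp [hT, hS, derivative_mul, derivative_pow, hDdef, hEdef]; try ring
      · intro j _ hjk; exact hTdz j k hjk
    simp only [hP, derivative_sub, derivative_mul, derivative_pow, derivative_sum,
      derivative_C, derivative_X, eval_sub, eval_add, eval_mul, eval_pow, eval_C, eval_X,
      hsum, hFx k]
    have hden : (x k - xt) ^ 2 * D k ^ 3 ≠ 0 :=
      mul_ne_zero (pow_ne_zero _ (hzx k)) (pow_ne_zero _ (hDne k))
    apply mul_right_cancel₀ hden
    linear_combination (-(x k - xt) * D k ^ 2) * ha' k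
      + (-((x k - xt) * D k ^ 3 + 2 * (x k - xt) ^ 2 * D k ^ 2 * E k)) * hb' k
  -- divisibility
  have hsq : ∀ k, (X - C (x k)) ^ 2 ∣ P := by
    intro k
    obtain ⟨P1, hP1⟩ := dvd_iff_isRoot.2 (hPk k)
    have h1 : P1.eval (x k) = 0 := by
      have h := hPdk k
      rw [hP1] at h
      simpa [derivative_mul] using h
    obtain ⟨P2, hP2⟩ := dvd_iff_isRoot.2 h1
    exact ⟨P2, by rw [hP1, hP2]; ring⟩
  have hprodvd : (∏ k : Fin g, (X - C (x k)) ^ 2) ∣ P :=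
    Finset.prod_dvd_of_coprime
      (fun j _ k _ hjk => ((pairwise_coprime_X_sub_C hx hjk).pow : IsCoprime _ _))
      (fun k _ => hsq k)
  have hcop1 : IsCoprime (X - C xt) (∏ k : Fin g, (X - C (x k)) ^ 2) :=
    IsCoprime.prod_right fun k _ =>
      (isCoprime_X_sub_C_of_isUnit_sub (by
        exact (sub_ne_zero.2 (hxt k)).isUnit)).pow_right
  have hGdvd : ((X - C xt) * ∏ k : Fin g, (X - C (x k)) ^ 2) ∣ P :=
    hcop1.mul_dvd (dvd_iff_isRoot.2 hPxt) hprodvd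
  -- the divisor is monic of degree 2g+1
  have hGmonic : ((X - C xt) * ∏ k : Fin g, (X - C (x k)) ^ 2).Monic :=
    (monic_X_sub_C xt).mul (monic_prod_of_monic _ _ fun k _ => (monic_X_sub_C _).pow _)
  have hGdeg : ((X - C xt) * ∏ k : Fin g, (X - C (x k)) ^ 2).natDegree = 2 * g + 1 := by
    rw [(monic_X_sub_C xt).natDegree_mul (monic_prod_of_monic _ _ fun k _ => (monic_X_sub_C _).pow _),
      natDegree_X_sub_C, natDegree_prod _ _ (fun i _ => pow_ne_zero _ (X_sub_C_ne_zero _))]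
    simp [natDegree_pow]
    omega
  -- degree bound on P
  have hAmonic : ((X - C xt) * F ^ 2).Monic := (monic_X_sub_C xt).mul (hFmonic.pow 2)
  have hAdeg : ((X - C xt) * F ^ 2).natDegree = 2 * g + 1 := by
    rw [(monic_X_sub_C xt).natDegree_mul (hFmonic.pow 2), natDegree_X_sub_C, natDegree_pow, hFdeg]
    omega
  have hPalt : P = (f - (X - C xt) * F ^ 2) - (C c * F ^ 2 + ∑ k, T k) := by
    rw [hP]; ring
  have hdeg1 : (f - (X - C xt) * F ^ 2).degree < ((2 * g + 1 : ℕ) : WithBot ℕ) := by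
    have hd' : f.degree = ((X - C xt) * F ^ 2).degree := by
      rw [degree_eq_natDegree hmonic.ne_zero, degree_eq_natDegree hAmonic.ne_zero, hdeg, hAdeg]
    have h := degree_sub_lt hd' hmonic.ne_zero
      (by rw [hmonic.leadingCoeff, hAmonic.leadingCoeff])
    rwa [degree_eq_natDegree hmonic.ne_zero, hdeg] at h
  have hdeg2 : (C c * F ^ 2 + ∑ k, T k).degree ≤ ((2 * g : ℕ) : WithBot ℕ) := by
    refine le_trans (degree_add_le _ _) (max_le ?_ ?_)
    · refine le_trans (degree_mul_le _ _) ?_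
      have h2 : (F ^ 2).degree = ((2 * g : ℕ) : WithBot ℕ) := by
        rw [degree_eq_natDegree (pow_ne_zero _ hFmonic.ne_zero), natDegree_pow, hFdeg]
      calc degree (C c) + degree (F ^ 2) ≤ 0 + ((2 * g : ℕ) : WithBot ℕ) :=
            add_le_add degree_C_le (le_of_eq h2)
        _ = ((2 * g : ℕ) : WithBot ℕ) := by rw [zero_add]
    · refine le_trans (degree_sum_le _ _) (Finset.sup_le fun k _ => ?_)
      have hg1 : 0 < g := k.pos
      have hnd : (T k).natDegree ≤ 2 * g := by
        have hS2 : (S k).natDegree ≤ 2 := by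
          refine le_trans (natDegree_add_le _ _) (max_le ?_ ?_)
          · refine le_trans (natDegree_mul_le) ?_
            have : ((X - C xt) * (X - C (x k))).natDegree ≤ 2 := by
              refine le_trans (natDegree_mul_le) ?_
              simp [natDegree_X_sub_C]
            simpa using this
          · refine le_trans (natDegree_mul_le) ?_
            simp [natDegree_X_sub_C]
        have hQ2 : (Q k ^ 2).natDegree = 2 * (g - 1) := by
          rw [natDegree_pow, hQdeg k]
        refine le_trans (natDegree_mul_le) ?_
        rw [hQ2]
        omega
      exact le_trans (degree_le_natDegree) (by exact_mod_cast hnd)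
  have hPdeg : P.degree < ((2 * g + 1 : ℕ) : WithBot ℕ) := by
    rw [hPalt]
    refine lt_of_le_of_lt (degree_sub_le _ _) (max_lt hdeg1 (lt_of_le_of_lt hdeg2 ?_))
    exact_mod_cast Nat.lt_succ_self (2 * g)
  -- P = 0
  have hP0 : P = 0 := by
    by_contra h
    have h1 := degree_le_of_dvd hGdvd h
    rw [degree_eq_natDegree hGmonic.ne_zero, hGdeg] at h1
    exact absurd hPdeg (not_lt.2 h1)
  -- coefficient extraction at X^(2g)
  have hA : ((X - C xt) * F ^ 2).coeff (2 * g) = -xt + (-∑ i, x i + -∑ i, x i) := by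
    have hnext : ((X - C xt) * F ^ 2).nextCoeff = -xt + (-∑ i, x i + -∑ i, x i) := by
      rw [sq, Monic.nextCoeff_mul (monic_X_sub_C xt) (hFmonic.mul hFmonic),
        Monic.nextCoeff_mul hFmonic hFmonic, nextCoeff_X_sub_C]
      congr 1
      rw [hF, prod_X_sub_C_nextCoeff]
    rw [← hnext, nextCoeff_of_natDegree_pos (by rw [hAdeg]; omega), hAdeg]
    norm_num
  have hB : (C c * F ^ 2).coeff (2 * g) = c := by
    rw [coeff_C_mul]
    have : (F ^ 2).coeff (2 * g) = 1 := by
      have h1 := (hFmonic.pow 2).coeff_natDegree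
      rwa [natDegree_pow, hFdeg] at h1
    rw [this, mul_one]
  have hTc : ∀ k : Fin g, (T k).coeff (2 * g) = a k := by
    intro k
    have hg1 : 0 < g := k.pos
    have hTalt : T k = C (a k) * ((X - C xt) * ((X - C (x k)) * Q k ^ 2))
        + C (b k) * ((X - C xt) * Q k ^ 2) := by
      rw [hT, hS]; ring
    have hM1m : ((X - C xt) * ((X - C (x k)) * Q k ^ 2)).Monic :=
      (monic_X_sub_C xt).mul ((monic_X_sub_C _).mul ((hQmonic k).pow 2))
    have hM1 : ((X - C xt) * ((X - C (x k)) * Q k ^ 2)).natDegree = 2 * g := by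
      rw [(monic_X_sub_C xt).natDegree_mul ((monic_X_sub_C _).mul ((hQmonic k).pow 2)),
        (monic_X_sub_C _).natDegree_mul ((hQmonic k).pow 2),
        natDegree_X_sub_C, natDegree_X_sub_C, natDegree_pow, hQdeg k]
      omega
    have hM2 : ((X - C xt) * Q k ^ 2).natDegree = 1 + 2 * (g - 1) := by
      rw [(monic_X_sub_C xt).natDegree_mul ((hQmonic k).pow 2),
        natDegree_X_sub_C, natDegree_pow, hQdeg k]
    have h2 : ((X - C xt) * Q k ^ 2).coeff (2 * g) = 0 :=
      coeff_eq_zero_of_natDegree_lt (by rw [hM2]; omega)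
    have h1 : ((X - C xt) * ((X - C (x k)) * Q k ^ 2)).coeff (2 * g) = 1 := by
      rw [show (2 * g) = ((X - C xt) * ((X - C (x k)) * Q k ^ 2)).natDegree from hM1.symm]
      exact hM1m.coeff_natDegree
    rw [hTalt, coeff_add, coeff_C_mul, coeff_C_mul, h1, h2, mul_zero, add_zero, mul_one]
  have hcoeff := congrArg (fun p : Polynomial ℂ => p.coeff (2 * g)) hP0
  simp only [hP, coeff_sub, finset_sum_coeff, coeff_zero, hA, hB,
    Finset.sum_congr rfl (fun k _ => hTc k)] at hcoeff
  -- conclusion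
  rw [Finset.sum_congr rfl (fun k _ => stepA k), hlam]
  have hcv : -f.eval xt / F.eval xt ^ 2 = -c := by
    rw [div_eq_iff (pow_ne_zero _ hFxt)]
    linear_combination hc'
  rw [hcv]
  linear_combination -hcoeff
end
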